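/- Consider an IIA social choice function on 3 alternatives and n voters given by pairwise functions f^{a>b}, f^{b>c}, f^{c>a} : {-1,1}^n → {-1,1}. If there exist distinct voters i ≠ j with voter i pivotal for f^{a>b} and voter j pivotal for f^{b>c}, then there exists a profile of transitive rankings producing a non-transitive outcome. -/

import Mathlib

/-- Voter `j` is pivotal for `f` if flipping coordinate `j` can change the value. -/
def Pivotal {n : ℕ} (f : (Fin n → Bool) → Bool) (j : Fin n) : Prop :=
  ∃ x : Fin n → Bool,
    f (Function.update x j true) ≠ f (Function.update x j false)

/-- `x^{a>b}` vector of a profile. -/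
def pairVec {n : ℕ} (a b : Fin 3) (σ : Fin n → Equiv.Perm (Fin 3)) : Fin n → Bool :=
  fun i => decide (σ i a < σ i b)

/-- A permutation of `Fin 3` realizing a prescribed non-constant triple of
pairwise comparison bits. -/
def mkPerm : Bool → Bool → Bool → Equiv.Perm (Fin 3)
  | true, true, _ => Equiv.refl _
  | true, false, true => (Equiv.swap 1 2).trans (Equiv.swap 0 1)
  | true, false, false => Equiv.swap 1 2
  | false, true, true => (Equiv.swap 0 1).trans (Equiv.swap 1 2)
  | false, true, false => Equiv.swap 0 1
  | false, false, _ => Equiv.swap 0 2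

lemma mkPerm_spec (p q r : Bool) (h : ¬ (p = q ∧ q = r)) :
    decide ((mkPerm p q r) 0 < (mkPerm p q r) 1) = p ∧
    decide ((mkPerm p q r) 1 < (mkPerm p q r) 2) = q ∧
    decide ((mkPerm p q r) 2 < (mkPerm p q r) 0) = r := by
  cases p <;> cases q <;> cases r <;> simp_all <;> decide

lemma exists_update_eq {n : ℕ} (g : (Fin n → Bool) → Bool) (w : Fin n) (x : Fin n → Bool)
    (h : g (Function.update x w true) ≠ g (Function.update x w false)) (c : Bool) :
    ∃ s, g (Function.update x w s) = c := by
  cases c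
  · cases ht : g (Function.update x w true)
    · exact ⟨true, ht⟩
    · cases hf : g (Function.update x w false)
      · exact ⟨false, hf⟩
      · exact absurd (ht.trans hf.symm) h
  · cases ht : g (Function.update x w true)
    · cases hf : g (Function.update x w false)
      · exact absurd (ht.trans hf.symm) h
      · exact ⟨false, hf⟩
    · exact ⟨true, ht⟩

/-- Two pivots imply a paradox, `n` voters: if distinct voters `i ≠ j` are pivotal
for `f^{a>b}` and `f^{b>c}` respectively, some profile of transitive rankings
produces a non-transitive (cyclic) outcome. -/
theorem stmt_6 (n : ℕ) (fab fbc fca : (Fin n → Bool) → Bool) (i j : Fin n)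
    (hij : i ≠ j) (hab : Pivotal fab i) (hbc : Pivotal fbc j) :
    ∃ σ : Fin n → Equiv.Perm (Fin 3),
      fab (pairVec 0 1 σ) = fbc (pairVec 1 2 σ) ∧
      fbc (pairVec 1 2 σ) = fca (pairVec 2 0 σ) := by
  obtain ⟨x, hx⟩ := hab
  obtain ⟨y, hy⟩ := hbc
  set z : Fin n → Bool := fun k => if k = i then !(y i) else !(x k) with hz
  set c : Bool := fca z with hc
  obtain ⟨s, hs⟩ := exists_update_eq fab i x hx c
  obtain ⟨t, ht⟩ := exists_update_eq fbc j y hy c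
  set p : Fin n → Bool := Function.update x i s with hp
  set q : Fin n → Bool := Function.update y j t with hq
  have hne : ∀ k, ¬ (p k = q k ∧ q k = z k) := by
    intro k
    by_cases hk : k = i
    · subst hk
      rintro ⟨h1, h2⟩
      rw [hq, Function.update_of_ne hij, hz] at h2
      simp at h2
    · rintro ⟨h1, h2⟩
      rw [hp, Function.update_of_ne hk] at h1
      rw [hz] at h2
      simp [hk] at h2
      rw [h1] at h2
      simp at h2
  refine ⟨fun k => mkPerm (p k) (q k) (z k), ?_⟩
  have e1 : pairVec 0 1 (fun k => mkPerm (p k) (q k) (z k)) = p :=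
    funext fun k => (mkPerm_spec _ _ _ (hne k)).1
  have e2 : pairVec 1 2 (fun k => mkPerm (p k) (q k) (z k)) = q :=
    funext fun k => (mkPerm_spec _ _ _ (hne k)).2.1
  have e3 : pairVec 2 0 (fun k => mkPerm (p k) (q k) (z k)) = z :=
    funext fun k => (mkPerm_spec _ _ _ (hne k)).2.2
  rw [e1, e2, e3, ← hp] at *
  exact ⟨hs.trans ht.symm, ht⟩
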